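/- arXiv:2007.04343 — 2 statements merged into one kernel-verified Lean document; each statement's English description precedes it below -/
import Mathlib

section
/- The set of mean-zero vectors y ∈ ℝ^N (N ≥ 2) with ‖y‖_1 ≤ 2 equals the convex hull of the N(N−1) vectors e_i − e_j (i ≠ j), where e_i are the standard basis vectors. -/
open Finset

namespace Stmt9Aux

variable {N : ℕ}

/-- the vector `e_i - e_j`. -/
def v (i j : Fin N) : Fin N → ℝ := fun l => if l = i then 1 else if l = j then -1 else 0

lemma v_split (i j : Fin N) (hij : i ≠ j) (l : Fin N) :
    v i j l = (if l = i then (1:ℝ) else 0) + (if l = j then (-1:ℝ) else 0) := by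
  unfold v
  by_cases h1 : l = i <;> by_cases h2 : l = j <;> simp_all

lemma sum_v (i j : Fin N) (hij : i ≠ j) : ∑ l, v i j l = 0 := by
  simp [fun l => v_split i j hij l, Finset.sum_add_distrib, Finset.sum_ite_eq']

lemma abs_v (i j : Fin N) (hij : i ≠ j) (l : Fin N) :
    |v i j l| = (if l = i then (1:ℝ) else 0) + (if l = j then (1:ℝ) else 0) := by
  unfold v
  by_cases h1 : l = i <;> by_cases h2 : l = j <;> simp_all

lemma sum_abs_v (i j : Fin N) (hij : i ≠ j) : ∑ l, |v i j l| = 2 := by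
  simp [fun l => abs_v i j hij l, Finset.sum_add_distrib, Finset.sum_ite_eq']
  norm_num

lemma v_add_rev (i j : Fin N) (hij : i ≠ j) (l : Fin N) : v i j l + v j i l = 0 := by
  unfold v
  by_cases h1 : l = i <;> by_cases h2 : l = j <;> simp_all

lemma key_sum (p q : Fin N → ℝ) (hm : ∀ i, p i * q i = 0) (l : Fin N) :
    ∑ x : Fin N × Fin N, p x.1 * q x.2 * v x.1 x.2 l
      = p l * (∑ j, q j) - q l * (∑ i, p i) := by
  have step1 : ∀ x : Fin N × Fin N, p x.1 * q x.2 * v x.1 x.2 l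
      = (if l = x.1 then p x.1 * q x.2 else 0) - (if l = x.2 then p x.1 * q x.2 else 0) := by
    rintro ⟨i, j⟩
    by_cases h : i = j
    · subst h
      simp [hm i]
    · simp only
      rw [v_split i j h l]
      by_cases h1 : l = i <;> by_cases h2 : l = j <;> simp_all
  simp only [step1]
  rw [Finset.sum_sub_distrib]
  congr 1
  · rw [Fintype.sum_prod_type_right]
    have h2 : ∀ j, ∑ i, (if l = i then p i * q j else 0) = p l * q j := by
      intro j
      rw [Finset.sum_ite_eq]
      simp
    simp only [h2]
    rw [Finset.mul_sum]
  · rw [Fintype.sum_prod_type]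
    have h2 : ∀ i, ∑ j, (if l = j then p i * q j else 0) = p i * q l := by
      intro i
      rw [Finset.sum_ite_eq]
      simp
    simp only [h2]
    rw [← Finset.sum_mul, mul_comm]

end Stmt9Aux

open Stmt9Aux

/-- The set of mean-zero vectors `y ∈ ℝ^N` (`N ≥ 2`) with `‖y‖₁ ≤ 2` is the convex hull
of the `N(N-1)` vectors `e_i - e_j` (`i ≠ j`). -/
theorem stmt9 (N : ℕ) (hN : 2 ≤ N) :
    {y : Fin N → ℝ | ∑ i, y i = 0 ∧ ∑ i, |y i| ≤ 2} =
      convexHull ℝ {w : Fin N → ℝ |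
        ∃ i j : Fin N, i ≠ j ∧
          w = fun l => if l = i then (1 : ℝ) else if l = j then -1 else 0} := by
  set S : Set (Fin N → ℝ) := {w : Fin N → ℝ |
        ∃ i j : Fin N, i ≠ j ∧
          w = fun l => if l = i then (1 : ℝ) else if l = j then -1 else 0} with hS
  have hmemS : ∀ i j : Fin N, i ≠ j → v i j ∈ S := by
    intro i j hij; exact ⟨i, j, hij, rfl⟩
  apply Set.Subset.antisymm
  · -- set ⊆ convex hull
    intro y hy
    obtain ⟨hy1, hy2⟩ := hy
    set p : Fin N → ℝ := fun i => max (y i) 0 with hp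
    set q : Fin N → ℝ := fun i => max (-(y i)) 0 with hq
    have hp0 : ∀ i, 0 ≤ p i := fun i => le_max_right _ _
    have hq0 : ∀ i, 0 ≤ q i := fun i => le_max_right _ _
    have hpq : ∀ i, p i - q i = y i := by
      intro i; simp only [hp, hq]
      rcases le_total (y i) 0 with h | h
      · rw [max_eq_right h, max_eq_left (by linarith)]; ring
      · rw [max_eq_left h, max_eq_right (by linarith)]; ring
    have hpqa : ∀ i, p i + q i = |y i| := by
      intro i; simp only [hp, hq]
      rcases le_total (y i) 0 with h | h
      · rw [max_eq_right h, max_eq_left (by linarith), abs_of_nonpos h]; ring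
      · rw [max_eq_left h, max_eq_right (by linarith), abs_of_nonneg h]; ring
    have hpqm : ∀ i, p i * q i = 0 := by
      intro i; simp only [hp, hq]
      rcases le_total (y i) 0 with h | h
      · rw [max_eq_right h]; ring
      · rw [max_eq_right (by linarith : -(y i) ≤ 0)]; ring
    set s : ℝ := ∑ i, p i with hs'
    have hsq : ∑ i, q i = s := by
      have h : ∑ i, (p i - q i) = 0 := by
        simp only [hpq]; exact hy1
      rw [Finset.sum_sub_distrib] at h
      linarith
    have hs0 : 0 ≤ s := Finset.sum_nonneg (fun i _ => hp0 i)
    have hs1 : s ≤ 1 := by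
      have h : ∑ i, (p i + q i) ≤ 2 := by simp only [hpqa]; exact hy2
      rw [Finset.sum_add_distrib, hsq] at h
      linarith
    set a : Fin N := ⟨0, by omega⟩ with ha
    set b : Fin N := ⟨1, by omega⟩ with hb
    have hab : a ≠ b := by simp [ha, hb, Fin.ext_iff]
    rcases eq_or_lt_of_le hs0 with hs | hs
    · -- s = 0, so y = 0
      have hy0 : ∀ i, y i = 0 := by
        intro i
        have h1 : p i = 0 := by
          have h := Finset.sum_eq_zero_iff_of_nonneg (fun i _ => hp0 i) |>.mp hs.symm
          exact h i (Finset.mem_univ i)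
        have h2 : q i = 0 := by
          have h3 : ∑ i, q i = 0 := by rw [hsq, ← hs]
          have h := Finset.sum_eq_zero_iff_of_nonneg (fun i _ => hq0 i) |>.mp h3
          exact h i (Finset.mem_univ i)
        rw [← hpq i, h1, h2]; ring
      have hyz : y = (1/2 : ℝ) • v a b + (1/2 : ℝ) • v b a := by
        funext l
        have h0 := v_add_rev a b hab l
        have h4 : ((1/2 : ℝ) • v a b + (1/2 : ℝ) • v b a) l
            = (1/2) * (v a b l + v b a l) := by
          simp only [Pi.add_apply, Pi.smul_apply, smul_eq_mul]; ring
        rw [hy0 l, h4, h0]; ring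
      rw [hyz]
      exact (convex_convexHull ℝ S) (subset_convexHull ℝ S (hmemS a b hab))
        (subset_convexHull ℝ S (hmemS b a hab.symm)) (by norm_num) (by norm_num) (by norm_num)
    · -- s > 0
      set wt : Fin N × Fin N → ℝ := fun x =>
        p x.1 * q x.2 / s + (if x = (a, b) then (1 - s)/2 else 0)
          + (if x = (b, a) then (1 - s)/2 else 0) with hwt
      set z : Fin N × Fin N → (Fin N → ℝ) := fun x =>
        if x.1 = x.2 then v a b else v x.1 x.2 with hz
      have hzab : z (a, b) = v a b := by
        simp only [hz]; rw [if_neg hab]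
      have hzba : z (b, a) = v b a := by
        simp only [hz]; rw [if_neg hab.symm]
      have hzmem : ∀ x : Fin N × Fin N, z x ∈ convexHull ℝ S := by
        intro x
        apply subset_convexHull ℝ S
        simp only [hz]
        by_cases h : x.1 = x.2
        · rw [if_pos h]; exact hmemS a b hab
        · rw [if_neg h]; exact hmemS x.1 x.2 h
      have hwt0 : ∀ x : Fin N × Fin N, 0 ≤ wt x := by
        intro x
        have h1 : 0 ≤ p x.1 * q x.2 / s :=
          div_nonneg (mul_nonneg (hp0 _) (hq0 _)) (le_of_lt hs)
        have h2 : (0:ℝ) ≤ (1 - s)/2 := by linarith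
        simp only [hwt]
        split <;> split <;> linarith
      have hpqs : ∑ x : Fin N × Fin N, p x.1 * q x.2 = s * s := by
        rw [Fintype.sum_prod_type]
        simp only [← Finset.mul_sum]
        rw [← Finset.sum_mul, hsq]
      have hwts : ∑ x : Fin N × Fin N, wt x = 1 := by
        simp only [hwt]
        rw [Finset.sum_add_distrib, Finset.sum_add_distrib]
        rw [Finset.sum_ite_eq' Finset.univ (a, b), Finset.sum_ite_eq' Finset.univ (b, a)]
        simp only [Finset.mem_univ, if_pos]
        have h : ∑ x : Fin N × Fin N, p x.1 * q x.2 / s = s := by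
          rw [← Finset.sum_div, hpqs]
          field_simp
        rw [h]; ring
      have key : ∑ x : Fin N × Fin N, wt x • z x = y := by
        funext l
        rw [Finset.sum_apply]
        have hterm : ∀ x : Fin N × Fin N, (wt x • z x) l =
            p x.1 * q x.2 / s * v x.1 x.2 l
            + (if x = (a, b) then (1 - s)/2 * z x l else 0)
            + (if x = (b, a) then (1 - s)/2 * z x l else 0) := by
          intro x
          have hsmul : (wt x • z x) l = wt x * z x l := rfl
          have hA : p x.1 * q x.2 / s * z x l = p x.1 * q x.2 / s * v x.1 x.2 l := by
            by_cases h : x.1 = x.2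
            · have h0 : p x.1 * q x.2 = 0 := by rw [h]; exact hpqm x.2
              rw [h0, zero_div, zero_mul, zero_mul]
            · simp only [hz]; rw [if_neg h]
          rw [hsmul]
          simp only [hwt]
          rw [add_mul, add_mul, ite_mul, ite_mul, zero_mul, hA]
        calc ∑ x : Fin N × Fin N, (wt x • z x) l
            = ∑ x : Fin N × Fin N, (p x.1 * q x.2 / s * v x.1 x.2 l
                + (if x = (a, b) then (1 - s)/2 * z x l else 0)
                + (if x = (b, a) then (1 - s)/2 * z x l else 0)) :=
              Finset.sum_congr rfl (fun x _ => hterm x)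
          _ = (∑ x : Fin N × Fin N, p x.1 * q x.2 / s * v x.1 x.2 l)
                + (1 - s)/2 * z (a, b) l + (1 - s)/2 * z (b, a) l := by
              rw [Finset.sum_add_distrib, Finset.sum_add_distrib,
                Finset.sum_ite_eq' Finset.univ (a, b), Finset.sum_ite_eq' Finset.univ (b, a)]
              simp only [Finset.mem_univ, if_pos]
          _ = y l := by
              rw [hzab, hzba]
              have hmain : ∑ x : Fin N × Fin N, p x.1 * q x.2 / s * v x.1 x.2 l = y l := by
                simp only [div_mul_eq_mul_div, ← Finset.sum_div]
                rw [show (∑ x : Fin N × Fin N, p x.1 * q x.2 * v x.1 x.2 l)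
                    = p l * (∑ j, q j) - q l * (∑ i, p i) from key_sum p q hpqm l]
                rw [hsq, ← hs', ← hpq l]
                field_simp
              rw [hmain]
              have h0 := v_add_rev a b hab l
              nlinarith [h0]
      rw [← key]
      exact Convex.sum_mem (convex_convexHull ℝ S) (fun x _ => hwt0 x) hwts (fun x _ => hzmem x)
  · -- convex hull ⊆ set
    apply convexHull_min
    · rintro w ⟨i, j, hij, rfl⟩
      exact ⟨sum_v i j hij, le_of_eq (sum_abs_v i j hij)⟩
    · rintro x ⟨hx1, hx2⟩ z ⟨hz1, hz2⟩ α β hα hβ hαβ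
      constructor
      · have h : ∀ l, (α • x + β • z) l = α * x l + β * z l := fun l => rfl
        simp only [h, Finset.sum_add_distrib, ← Finset.mul_sum, hx1, hz1]
        ring
      · have h1 : ∀ l, |(α • x + β • z) l| ≤ α * |x l| + β * |z l| := by
          intro l
          calc |α * x l + β * z l| ≤ |α * x l| + |β * z l| := abs_add_le _ _
            _ = α * |x l| + β * |z l| := by
                rw [abs_mul, abs_mul, abs_of_nonneg hα, abs_of_nonneg hβ]
        calc ∑ l, |(α • x + β • z) l| ≤ ∑ l, (α * |x l| + β * |z l|) :=
              Finset.sum_le_sum (fun l _ => h1 l)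
          _ = α * ∑ l, |x l| + β * ∑ l, |z l| := by
              rw [Finset.sum_add_distrib, Finset.mul_sum, Finset.mul_sum]
          _ ≤ α * 2 + β * 2 := by gcongr
          _ = 2 := by linarith
end

section
/- The convex hull of all coordinate permutations of the vectors v_k ∈ ℝ^N (with k entries equal to N−k and N−k entries equal to −k, for 1 ≤ k ≤ N−1) equals the set of mean-zero vectors y with max_i y_i − min_i y_i ≤ N. -/
theorem tele1 (h : ℕ → ℝ) (a b : ℕ) (hab : a ≤ b) :
    ∑ k ∈ Finset.Icc (a+1) b, (h k - h (k-1)) = h b - h a := by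
  rw [← Finset.Ico_add_one_right_eq_Icc, Finset.sum_Ico_eq_sum_range]
  have hba : b + 1 - (a+1) = b - a := by omega
  rw [hba]
  rw [Finset.sum_congr rfl (fun i _ => by congr 2 <;> omega :
    ∀ i ∈ Finset.range (b-a), h (a+1+i) - h (a+1+i-1) = h (a+(i+1)) - h (a+i))]
  rw [Finset.sum_range_sub (fun i => h (a+i))]
  congr 2; omega

theorem tele2 (h : ℕ → ℝ) (m : ℕ) :
    ∑ k ∈ Finset.Icc 1 m, (k:ℝ) * (h k - h (k-1)) = m * h m - ∑ k ∈ Finset.range m, h k := by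
  induction m with
  | zero => simp
  | succ n ih =>
    rw [Finset.sum_Icc_succ_top (by omega : 1 ≤ n+1), ih, Finset.sum_range_succ]
    have : n + 1 - 1 = n := rfl
    rw [this]; push_cast; ring

theorem sortedId (N : ℕ) (hN : 2 ≤ N) (g : ℕ → ℝ)
    (hsum : ∑ n ∈ Finset.range N, g n = 0) (m : ℕ) (hm : m < N) :
    ∑ k ∈ Finset.Icc 1 (N-1), ((g k - g (k-1))/N) * (if m < k then (k:ℝ) - N else k) = g m := by
  have hN0 : (N:ℝ) ≠ 0 := by positivity
  have e : ∀ k ∈ Finset.Icc 1 (N-1), ((g k - g (k-1))/N) * (if m < k then (k:ℝ) - N else k)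
      = (k:ℝ) * (g k - g (k-1)) / N - (if m < k then (g k - g (k-1)) else 0) := by
    intro k hk; split_ifs <;> field_simp <;> ring
  rw [Finset.sum_congr rfl e, Finset.sum_sub_distrib, ← Finset.sum_div, tele2 g (N-1),
    ← Finset.sum_filter]
  have hfil : (Finset.Icc 1 (N-1)).filter (fun k => m < k) = Finset.Icc (m+1) (N-1) := by
    ext k; simp only [Finset.mem_filter, Finset.mem_Icc]; omega
  rw [hfil, tele1 g m (N-1) (by omega)]
  have hrs : ∑ k ∈ Finset.range (N-1), g k = - g (N-1) := by
    have hNe : N = (N-1) + 1 := by omega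
    rw [hNe, Finset.sum_range_succ] at hsum; linarith
  rw [hrs]
  have hc : ((N-1:ℕ):ℝ) = (N:ℝ) - 1 := by push_cast [Nat.cast_sub (by omega : 1 ≤ N)]; ring
  rw [hc]; field_simp; ring

theorem spread_iff {N : ℕ} (hne : (Finset.univ : Finset (Fin N)).Nonempty) (y : Fin N → ℝ) (C : ℝ) :
    Finset.univ.sup' hne y - Finset.univ.inf' hne y ≤ C ↔ ∀ p q, y p - y q ≤ C := by
  constructor
  · intro h p q
    have h1 : y p ≤ Finset.univ.sup' hne y := Finset.le_sup' y (Finset.mem_univ p)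
    have h2 : Finset.univ.inf' hne y ≤ y q := Finset.inf'_le y (Finset.mem_univ q)
    linarith
  · intro h
    obtain ⟨p, -, hp⟩ := Finset.exists_mem_eq_sup' hne y
    obtain ⟨q, -, hq⟩ := Finset.exists_mem_eq_inf' hne y
    rw [hp, hq]; exact h p q




/-- The convex hull of all coordinate permutations of the vectors `v_k ∈ ℝ^N`
(with `k` entries equal to `N - k` and `N - k` entries equal to `-k`, `1 ≤ k ≤ N-1`)
is exactly the set of mean-zero vectors with spread `max_i y_i - min_i y_i ≤ N`. -/
theorem stmt10 (N : ℕ) (hN : 2 ≤ N) :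
    convexHull ℝ {w : Fin N → ℝ |
        ∃ k : ℕ, 1 ≤ k ∧ k ≤ N - 1 ∧ ∃ σ : Equiv.Perm (Fin N),
          w = (fun i : Fin N => if (i : ℕ) < k then ((N : ℝ) - k) else -(k : ℝ)) ∘ σ} =
      {y : Fin N → ℝ | ∑ i, y i = 0 ∧
        (Finset.univ.sup' (Finset.univ_nonempty_iff.mpr ⟨⟨0, by omega⟩⟩) y) -
          (Finset.univ.inf' (Finset.univ_nonempty_iff.mpr ⟨⟨0, by omega⟩⟩) y) ≤ N} := by
  apply subset_antisymm
  · -- easy direction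
      have hne : (Finset.univ : Finset (Fin N)).Nonempty :=
        Finset.univ_nonempty_iff.mpr ⟨⟨0, by omega⟩⟩
      apply convexHull_min
      · rintro w ⟨k, hk1, hk2, σ, rfl⟩
        have hkN : k ≤ N := by omega
        constructor
        · simp only [Function.comp_apply]
          rw [Equiv.sum_comp σ (fun i : Fin N => if (i:ℕ) < k then ((N:ℝ) - k) else -(k:ℝ))]
          rw [Fin.sum_univ_eq_sum_range (fun n => if n < k then ((N:ℝ)-k) else -(k:ℝ)) N]
          rw [Finset.range_eq_Ico, ← Finset.sum_Ico_consecutive _ (Nat.zero_le k) hkN]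
          rw [Finset.sum_congr rfl (fun n hn => if_pos (Finset.mem_Ico.mp hn).2 :
            ∀ n ∈ Finset.Ico 0 k, (if n < k then ((N:ℝ)-k) else -(k:ℝ)) = ((N:ℝ)-k))]
          rw [Finset.sum_congr rfl (fun n hn => if_neg (by have := (Finset.mem_Ico.mp hn).1; omega) :
            ∀ n ∈ Finset.Ico k N, (if n < k then ((N:ℝ)-k) else -(k:ℝ)) = -(k:ℝ))]
          rw [Finset.sum_const, Finset.sum_const, Nat.card_Ico, Nat.card_Ico]
          have : ((N - k : ℕ) : ℝ) = (N:ℝ) - k := by push_cast [Nat.cast_sub hkN]; ring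
          simp only [nsmul_eq_mul, Nat.sub_zero, this]
          ring
        · rw [spread_iff hne]
          intro p q
          have hNR : (0:ℝ) ≤ N := by positivity
          simp only [Function.comp_apply]
          split_ifs <;> linarith
      · rintro u hu v hv a b ha hb hab
        obtain ⟨hu1, hu2⟩ := hu
        obtain ⟨hv1, hv2⟩ := hv
        constructor
        · simp only [Pi.add_apply, Pi.smul_apply, smul_eq_mul]
          rw [Finset.sum_add_distrib, ← Finset.mul_sum, ← Finset.mul_sum, hu1, hv1]; ring
        · rw [spread_iff hne] at hu2 hv2 ⊢
          intro p q
          have e1 := mul_le_mul_of_nonneg_left (hu2 p q) ha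
          have e2 := mul_le_mul_of_nonneg_left (hv2 p q) hb
          have e3 : a * (N:ℝ) + b * N = N := by rw [← add_mul, hab, one_mul]
          simp only [Pi.add_apply, Pi.smul_apply, smul_eq_mul]
          nlinarith
  · -- hard direction
      have hne : (Finset.univ : Finset (Fin N)).Nonempty :=
        Finset.univ_nonempty_iff.mpr ⟨⟨0, by omega⟩⟩
      rintro y ⟨hsum, hspread⟩
      have hspread2 : Finset.univ.sup' hne y - Finset.univ.inf' hne y ≤ N := hspread
      set τ := Tuple.sort y with hτ
      have hmono : Monotone (y ∘ τ) := Tuple.monotone_sort y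
      set g : ℕ → ℝ := fun n => if h : n < N then y (τ ⟨n, h⟩) else 0 with hg
      have hNm : N - 1 < N := by omega
      have h0N : 0 < N := by omega
      have hgy : ∀ i : Fin N, y i = g ((τ.symm i : Fin N) : ℕ) := by
        intro i
        simp only [hg, dif_pos (τ.symm i).isLt, Fin.eta, Equiv.apply_symm_apply]
      have hgmono : ∀ a b : ℕ, a ≤ b → b < N → g a ≤ g b := by
        intro a b hab hbN
        have haN : a < N := lt_of_le_of_lt hab hbN
        simp only [hg, dif_pos haN, dif_pos hbN]
        exact hmono (show (⟨a, haN⟩ : Fin N) ≤ ⟨b, hbN⟩ from hab)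
      have hgsum : ∑ n ∈ Finset.range N, g n = 0 := by
        rw [← Fin.sum_univ_eq_sum_range]
        rw [show ∑ i : Fin N, g (i : ℕ) = ∑ i : Fin N, y (τ i) from
          Finset.sum_congr rfl (fun i _ => by simp [hg, i.isLt])]
        exact (Equiv.sum_comp τ y).trans hsum
      have hspread' : g (N-1) - g 0 ≤ N := by
        have h1 : g (N-1) ≤ Finset.univ.sup' hne y := by
          rw [show g (N-1) = y (τ ⟨N-1, hNm⟩) from by simp [hg, hNm]]
          exact Finset.le_sup' y (Finset.mem_univ _)
        have h2 : Finset.univ.inf' hne y ≤ g 0 := by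
          rw [show g 0 = y (τ ⟨0, h0N⟩) from by simp [hg, h0N]]
          exact Finset.inf'_le y (Finset.mem_univ _)
        linarith
      have hNR : (0:ℝ) < N := by positivity
      set r : ℝ := 1 - (g (N-1) - g 0)/N with hr
      have hr0 : (0:ℝ) ≤ r := by
        rw [hr, sub_nonneg, div_le_one hNR]; exact hspread'
      set W : ℕ → ℝ := fun k => if k = 0 ∨ k = N then r/2 else (g k - g (k-1))/N with hW
      set ρ : Equiv.Perm (Fin N) := τ.symm.trans (Fin.revPerm) with hρ
      set Vf : ℕ → Fin N → ℝ :=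
        fun k i => if (i : ℕ) < k then ((N : ℝ) - k) else -(k : ℝ) with hVf
      set P : ℕ → Fin N → ℝ := fun k =>
        if k = 0 then Vf 1 ∘ ⇑τ.symm else if k = N then Vf (N-1) ∘ ⇑ρ else Vf (N-k) ∘ ⇑ρ with hP
      have hins : Finset.range (N+1) = insert 0 (insert N (Finset.Icc 1 (N-1))) := by
        ext n
        simp only [Finset.mem_range, Finset.mem_insert, Finset.mem_Icc]
        omega
      have h0ni : (0:ℕ) ∉ insert N (Finset.Icc 1 (N-1)) := by
        simp only [Finset.mem_insert, Finset.mem_Icc]; omega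
      have hNni : N ∉ Finset.Icc 1 (N-1) := by
        simp only [Finset.mem_Icc]; omega
      have hW0v : W 0 = r/2 := by simp [hW]
      have hWNv : W N = r/2 := by simp [hW]
      have hWkv : ∀ k ∈ Finset.Icc 1 (N-1), W k = (g k - g (k-1))/N := by
        intro k hk
        have hk' := Finset.mem_Icc.mp hk
        simp only [hW]; rw [if_neg (by omega)]
      have hWsum : ∑ k ∈ Finset.range (N+1), W k = 1 := by
        rw [hins, Finset.sum_insert h0ni, Finset.sum_insert hNni,
          Finset.sum_congr rfl hWkv, ← Finset.sum_div]
        have t : ∑ k ∈ Finset.Icc 1 (N-1), (g k - g (k-1)) = g (N-1) - g 0 :=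
          tele1 g 0 (N-1) (by omega)
        rw [t, hW0v, hWNv, hr]
        field_simp
        ring
      have hW0 : ∀ k ∈ Finset.range (N+1), 0 ≤ W k := by
        intro k hk
        have hkr := Finset.mem_range.mp hk
        simp only [hW]
        split_ifs with h
        · exact div_nonneg hr0 (by norm_num)
        · push_neg at h
          apply div_nonneg _ hNR.le
          rw [sub_nonneg]
          exact hgmono (k-1) k (by omega) (by omega)
      have hPmem : ∀ k ∈ Finset.range (N+1),
          P k ∈ {w : Fin N → ℝ | ∃ k : ℕ, 1 ≤ k ∧ k ≤ N - 1 ∧ ∃ σ : Equiv.Perm (Fin N),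
              w = (fun i : Fin N => if (i : ℕ) < k then ((N : ℝ) - k) else -(k : ℝ)) ∘ σ} := by
        intro k hk
        have hkr := Finset.mem_range.mp hk
        by_cases h0 : k = 0
        · refine ⟨1, le_rfl, by omega, τ.symm, ?_⟩
          simp only [hP, h0, if_pos rfl, hVf]
        · by_cases hN' : k = N
          · refine ⟨N-1, by omega, le_rfl, ρ, ?_⟩
            simp only [hP]
            rw [if_neg h0, hN', if_pos rfl, hVf]
          · refine ⟨N-k, by omega, by omega, ρ, ?_⟩
            simp only [hP]
            rw [if_neg h0, if_neg hN', hVf]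
      have hy : y = ∑ k ∈ Finset.range (N+1), W k • P k := by
        funext i
        rw [Finset.sum_apply]
        simp only [Pi.smul_apply, smul_eq_mul]
        have hmN : ((τ.symm i : Fin N) : ℕ) < N := (τ.symm i).isLt
        set m : ℕ := ((τ.symm i : Fin N) : ℕ) with hm
        have hrev : ((ρ i : Fin N) : ℕ) = N - (m+1) := by
          simp only [hρ, Equiv.trans_apply, Fin.revPerm_apply, Fin.val_rev, ← hm]
        have hcast1 : ((N-1:ℕ):ℝ) = (N:ℝ) - 1 := by
          push_cast [Nat.cast_sub (by omega : 1 ≤ N)]; ring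
        have hP0 : P 0 i = (if m < 1 then ((N:ℝ) - 1) else -1) := by
          have h1 : P 0 i = Vf 1 (τ.symm i) := by
            simp [hP]
          rw [h1]
          simp only [hVf, ← hm, Nat.cast_one]
        have hPN : P N i = (if m < 1 then (1 - (N:ℝ)) else 1) := by
          have h1 : P N i = Vf (N-1) (ρ i) := by
            simp [hP, (show N ≠ 0 by omega)]
          rw [h1]
          simp only [hVf, hrev, hcast1]
          by_cases hm1 : m < 1
          · rw [if_pos hm1, if_neg (by omega : ¬ (N - (m+1) < N - 1))]
            ring
          · rw [if_neg hm1, if_pos (by omega : N - (m+1) < N - 1)]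
            ring
        have hPk : ∀ k ∈ Finset.Icc 1 (N-1), W k * P k i
            = ((g k - g (k-1))/N) * (if m < k then (k:ℝ) - N else (k:ℝ)) := by
          intro k hk
          have hk' := Finset.mem_Icc.mp hk
          have hck : ((N-k:ℕ):ℝ) = (N:ℝ) - (k:ℝ) := by
            push_cast [Nat.cast_sub (by omega : k ≤ N)]; ring
          have hPki : P k i = (if m < k then (k:ℝ) - N else (k:ℝ)) := by
            have h1 : P k i = Vf (N-k) (ρ i) := by
              simp [hP, (show k ≠ 0 by omega), (show k ≠ N by omega)]
            rw [h1]
            simp only [hVf, hrev, hck]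
            by_cases hmk : m < k
            · rw [if_neg (by omega : ¬ (N - (m+1) < N - k))]
              rw [if_pos hmk]; ring
            · rw [if_pos (by omega : N - (m+1) < N - k)]
              rw [if_neg hmk]; ring
          rw [hWkv k hk, hPki]
        rw [hins, Finset.sum_insert h0ni, Finset.sum_insert hNni,
          Finset.sum_congr rfl hPk, sortedId N hN g hgsum m hmN,
          hW0v, hWNv, hP0, hPN, hgy i, ← hm]
        by_cases hm1 : m < 1
        · rw [if_pos hm1, if_pos hm1]; ring
        · rw [if_neg hm1, if_neg hm1]; ring
      have hmem := Finset.centerMass_mem_convexHull (Finset.range (N+1)) hW0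
        (by rw [hWsum]; norm_num) hPmem
      rw [Finset.centerMass_eq_of_sum_1 _ _ hWsum] at hmem
      rw [hy]
      exact hmem
end
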